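/- Let b = [[-2,1,1,1],[1,-2,1,1],[1,1,-2,1],[1,1,1,-2]] (matrix b^(28)) and I the 2×2 identity, over ℂ(ξ_α,ξ_β,ξ_γ). With R_{βα} = −(I⊗I − ξ_α b)⁻¹(I⊗I − ξ_β b), the Yang–Baxter equation (R_{γβ}⊗I)(I⊗R_{γα})(R_{βα}⊗I) = (I⊗R_{βα})(R_{γα}⊗I)(I⊗R_{γβ}) holds. -/

import Mathlib

open Matrix

noncomputable section

/-- The field of rational functions in the three spectral parameters `ξ_α, ξ_β, ξ_γ`. -/
abbrev KK : Type := FractionRing (MvPolynomial (Fin 3) ℚ)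

/-- The spectral parameters `ξ 0 = ξ_α`, `ξ 1 = ξ_β`, `ξ 2 = ξ_γ` as elements of `KK`. -/
def xi (i : Fin 3) : KK := algebraMap (MvPolynomial (Fin 3) ℚ) KK (MvPolynomial.X i)

/-- Reindexing of a 4×4 matrix by pairs, lexicographically: 0↦11, 1↦12, 2↦21, 3↦22. -/
def toPairs (M : Matrix (Fin 4) (Fin 4) KK) :
    Matrix (Fin 2 × Fin 2) (Fin 2 × Fin 2) KK :=
  Matrix.reindex finProdFinEquiv.symm finProdFinEquiv.symm M

/-- The matrix `b^(28)` of Alimohammadi–Ahmadi. -/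
def bmat : Matrix (Fin 2 × Fin 2) (Fin 2 × Fin 2) KK :=
  toPairs !![-2,1,1,1; 1,-2,1,1; 1,1,-2,1; 1,1,1,-2]

/-- The scattering matrix `R_{βα} = −(I⊗I − ξ_α b)⁻¹ (I⊗I − ξ_β b)`
(here `1` is the 4×4 identity `I⊗I`). -/
def R (β α : Fin 3) : Matrix (Fin 2 × Fin 2) (Fin 2 × Fin 2) KK :=
  -((1 - xi α • bmat)⁻¹ * (1 - xi β • bmat))

/-- `A ⊗ I` acting on the first two tensor factors of `(ℂ²)^{⊗3}`. -/
def legL (A : Matrix (Fin 2 × Fin 2) (Fin 2 × Fin 2) KK) :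
    Matrix (Fin 2 × Fin 2 × Fin 2) (Fin 2 × Fin 2 × Fin 2) KK :=
  Matrix.of fun p q => A (p.1, p.2.1) (q.1, q.2.1) * (if p.2.2 = q.2.2 then 1 else 0)

/-- `I ⊗ A` acting on the last two tensor factors of `(ℂ²)^{⊗3}`. -/
def legR (A : Matrix (Fin 2 × Fin 2) (Fin 2 × Fin 2) KK) :
    Matrix (Fin 2 × Fin 2 × Fin 2) (Fin 2 × Fin 2 × Fin 2) KK :=
  Matrix.of fun p q => (if p.1 = q.1 then 1 else 0) * A (p.2.1, p.2.2) (q.2.1, q.2.2)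

/-! ### Auxiliary definitions and lemmas -/

lemma one_sub_xi_ne (i : Fin 3) : (1 : KK) - xi i ≠ 0 := by
  have h : ((1 : MvPolynomial (Fin 3) ℚ) - MvPolynomial.X i) ≠ 0 := by
    intro h
    have := congrArg (MvPolynomial.coeff 0) h
    simp [MvPolynomial.coeff_X] at this
  intro hc
  apply (IsFractionRing.injective (MvPolynomial (Fin 3) ℚ) KK).ne h
  rw [map_sub, map_zero, _root_.map_one]
  exact hc

lemma one_add_three_xi_ne (i : Fin 3) : (1 : KK) + 3 * xi i ≠ 0 := by
  have h : ((1 : MvPolynomial (Fin 3) ℚ) + 3 * MvPolynomial.X i) ≠ 0 := by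
    intro h
    have := congrArg (MvPolynomial.coeff 0) h
    simp [MvPolynomial.coeff_X, MvPolynomial.coeff_mul_X'] at this
  intro hc
  apply (IsFractionRing.injective (MvPolynomial (Fin 3) ℚ) KK).ne h
  rw [map_add, _root_.map_one, _root_.map_mul, map_ofNat, map_zero]
  exact hc

/-- The all-ones 4×4 matrix (on pair indices). -/
def J4 : Matrix (Fin 2 × Fin 2) (Fin 2 × Fin 2) KK := Matrix.of fun _ _ => 1

lemma bmat_eq : bmat = J4 - (3:KK) • 1 := by
  ext ⟨a,b⟩ ⟨c,d⟩
  fin_cases a <;> fin_cases b <;> fin_cases c <;> fin_cases d <;>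
    simp [bmat, toPairs, finProdFinEquiv, J4, Matrix.one_apply, Prod.ext_iff,
      vecHead, vecTail] <;> norm_num

lemma hJ4 : J4 * J4 = (4:KK) • J4 := by
  ext p q
  simp [Matrix.mul_apply, J4, Fintype.sum_prod_type, Fin.sum_univ_two]

/-- Generic product formula for matrices of the form `p•1 + q•J` with `J² = 4J`. -/
lemma comb_mul_gen {K : Type} [Field K] {n : Type} [Fintype n] [DecidableEq n]
    (J : Matrix n n K) (hJ : J * J = (4:K) • J) (p q r s : K) :
    (p • (1 : Matrix n n K) + q • J) * (r • 1 + s • J)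
      = (p*r) • 1 + (p*s + q*r + 4*(q*s)) • J := by
  simp only [add_mul, mul_add, Matrix.smul_mul, Matrix.mul_smul, one_mul, mul_one,
    hJ, smul_smul]
  module

lemma hM_gen {K : Type} [Field K] {n : Type} [Fintype n] [DecidableEq n]
    (J : Matrix n n K) (a : K) :
    1 - a • (J - (3:K) • 1) = (1 + 3 * a) • (1 : Matrix n n K) + (-a) • J := by
  module

lemma hM (α : Fin 3) : 1 - xi α • bmat
    = (1 + 3 * xi α) • (1 : Matrix (Fin 2 × Fin 2) (Fin 2 × Fin 2) KK) + (-(xi α)) • J4 := by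
  rw [bmat_eq]; exact hM_gen J4 (xi α)

/-- Coefficients of the scattering matrix. -/
def uu (β α : Fin 3) : KK := (1 + 3 * xi β)/(1 + 3 * xi α)
def vv (β α : Fin 3) : KK := (xi α - xi β)/((1 - xi α)*(1 + 3 * xi α))

lemma Ninv (α : Fin 3) : (1 - xi α • bmat)⁻¹
    = (1/(1 + 3 * xi α)) • 1 + (xi α/((1 - xi α)*(1 + 3 * xi α))) • J4 := by
  have h1 := one_sub_xi_ne α
  have h2 := one_add_three_xi_ne α
  refine Matrix.inv_eq_right_inv ?_
  rw [hM, comb_mul_gen J4 hJ4]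
  have hx : (1 + 3 * xi α) * (1/(1 + 3 * xi α)) = 1 := by field_simp
  have hy : (1 + 3 * xi α) * (xi α/((1 - xi α)*(1 + 3 * xi α)))
      + (-(xi α)) * (1/(1 + 3 * xi α))
      + 4 * ((-(xi α)) * (xi α/((1 - xi α)*(1 + 3 * xi α)))) = 0 := by
    field_simp
    ring
  rw [hx, hy, one_smul, zero_smul, add_zero]

lemma Rexp (β α : Fin 3) : R β α = -(uu β α • 1 + vv β α • J4) := by
  have h1 := one_sub_xi_ne α
  have h2 := one_add_three_xi_ne α
  rw [R, Ninv, hM β, comb_mul_gen J4 hJ4]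
  have hx : (1/(1 + 3 * xi α)) * (1 + 3 * xi β) = uu β α := by
    rw [uu]; field_simp
  have hy : (1/(1 + 3 * xi α)) * (-(xi β))
      + (xi α/((1 - xi α)*(1 + 3 * xi α))) * (1 + 3 * xi β)
      + 4 * ((xi α/((1 - xi α)*(1 + 3 * xi α))) * (-(xi β))) = vv β α := by
    rw [vv]; field_simp; ring
  rw [hx, hy]

/-- `J ⊗ I` on three tensor factors. -/
def JL : Matrix (Fin 2 × Fin 2 × Fin 2) (Fin 2 × Fin 2 × Fin 2) KK :=
  Matrix.of fun p q => if p.2.2 = q.2.2 then 1 else 0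
/-- `I ⊗ J` on three tensor factors. -/
def JR : Matrix (Fin 2 × Fin 2 × Fin 2) (Fin 2 × Fin 2 × Fin 2) KK :=
  Matrix.of fun p q => if p.1 = q.1 then 1 else 0
/-- The all-ones 8×8 matrix. -/
def E8 : Matrix (Fin 2 × Fin 2 × Fin 2) (Fin 2 × Fin 2 × Fin 2) KK :=
  Matrix.of fun _ _ => 1

lemma hLL : JL * JL = (4:KK) • JL := by
  ext ⟨a,b,c⟩ ⟨d,e,f⟩
  fin_cases c <;> fin_cases f <;>
    simp only [Matrix.mul_apply, JL, Matrix.of_apply, Matrix.smul_apply, smul_eq_mul,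
      Fintype.sum_prod_type, Fin.sum_univ_two] <;> norm_num
lemma hRR : JR * JR = (4:KK) • JR := by
  ext ⟨a,b,c⟩ ⟨d,e,f⟩
  fin_cases a <;> fin_cases d <;>
    simp only [Matrix.mul_apply, JR, Matrix.of_apply, Matrix.smul_apply, smul_eq_mul,
      Fintype.sum_prod_type, Fin.sum_univ_two] <;> norm_num
lemma hLR : JL * JR = (2:KK) • E8 := by
  ext ⟨a,b,c⟩ ⟨d,e,f⟩
  fin_cases c <;> fin_cases d <;>
    simp only [Matrix.mul_apply, JL, JR, E8, Matrix.of_apply, Matrix.smul_apply, smul_eq_mul,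
      Fintype.sum_prod_type, Fin.sum_univ_two] <;> norm_num
lemma hRL : JR * JL = (2:KK) • E8 := by
  ext ⟨a,b,c⟩ ⟨d,e,f⟩
  fin_cases a <;> fin_cases f <;>
    simp only [Matrix.mul_apply, JL, JR, E8, Matrix.of_apply, Matrix.smul_apply, smul_eq_mul,
      Fintype.sum_prod_type, Fin.sum_univ_two] <;> norm_num
lemma hEL : E8 * JL = (4:KK) • E8 := by
  ext ⟨a,b,c⟩ ⟨d,e,f⟩
  fin_cases f <;>
    simp only [Matrix.mul_apply, JL, E8, Matrix.of_apply, Matrix.smul_apply, smul_eq_mul,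
      Fintype.sum_prod_type, Fin.sum_univ_two] <;> norm_num
lemma hER : E8 * JR = (4:KK) • E8 := by
  ext ⟨a,b,c⟩ ⟨d,e,f⟩
  fin_cases d <;>
    simp only [Matrix.mul_apply, JR, E8, Matrix.of_apply, Matrix.smul_apply, smul_eq_mul,
      Fintype.sum_prod_type, Fin.sum_univ_two] <;> norm_num

lemma legL_comb (x y : KK) : legL (-(x • 1 + y • J4))
    = -(x • (1 : Matrix (Fin 2 × Fin 2 × Fin 2) (Fin 2 × Fin 2 × Fin 2) KK) + y • JL) := by
  ext p q
  simp only [legL, Matrix.of_apply, Matrix.neg_apply, Matrix.add_apply, Matrix.smul_apply,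
    Matrix.one_apply, J4, JL, smul_eq_mul, mul_one]
  by_cases h1 : p.1 = q.1 <;> by_cases h2 : p.2.1 = q.2.1 <;> by_cases h3 : p.2.2 = q.2.2 <;>
    simp [Prod.ext_iff, h1, h2, h3] <;> ring

lemma legR_comb (x y : KK) : legR (-(x • 1 + y • J4))
    = -(x • (1 : Matrix (Fin 2 × Fin 2 × Fin 2) (Fin 2 × Fin 2 × Fin 2) KK) + y • JR) := by
  ext p q
  simp only [legR, Matrix.of_apply, Matrix.neg_apply, Matrix.add_apply, Matrix.smul_apply,
    Matrix.one_apply, J4, JR, smul_eq_mul, one_mul]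
  by_cases h1 : p.1 = q.1 <;> by_cases h2 : p.2.1 = q.2.1 <;> by_cases h3 : p.2.2 = q.2.2 <;>
    simp [Prod.ext_iff, h1, h2, h3] <;> ring

/-- Generic Yang–Baxter computation in the commutative algebra generated by
`1, JL, JR, E` with the multiplication table of the leg matrices. -/
lemma yb_core {K : Type} [Field K] {n : Type} [Fintype n] [DecidableEq n]
    (JL JR E : Matrix n n K)
    (hLL : JL*JL = (4:K)•JL) (hRR : JR*JR = (4:K)•JR)
    (hLR : JL*JR = (2:K)•E) (hRL : JR*JL = (2:K)•E)
    (hEL : E*JL = (4:K)•E) (hER : E*JR = (4:K)•E)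
    (x1 y1 x2 y2 x3 y3 : K)
    (key : x3*(x1*y2+x2*y1+4*(y1*y2)) = x1*(x2*y3)) :
    (x1•1+y1•JL) * (x3•1+y3•JR) * (x2•1+y2•JL)
      = (x2•1+y2•JR) * (x3•1+y3•JL) * (x1•1+y1•JR) := by
  simp only [add_mul, mul_add, Matrix.smul_mul, Matrix.mul_smul, one_mul, mul_one,
    hLL, hRR, hLR, hRL, hEL, hER, smul_smul]
  match_scalars
  all_goals try ring
  all_goals try linear_combination key
  all_goals try linear_combination -key
  all_goals try linear_combination (2:K)*key
  all_goals linear_combination (-2:K)*key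

/-- Rescaled (polynomial) coefficients of the scattering matrix. -/
def ss (α : Fin 3) : KK := -(1/((1 - xi α)*(1 + 3 * xi α)))
def xx (β α : Fin 3) : KK := (1 + 3 * xi β)*(1 - xi α)
def yy (β α : Fin 3) : KK := xi α - xi β

lemma Rexp2 (β α : Fin 3) : R β α = ss α • (xx β α • 1 + yy β α • J4) := by
  have h1 := one_sub_xi_ne α
  have h2 := one_add_three_xi_ne α
  have e1 : ss α * xx β α = -(uu β α) := by
    rw [ss, xx, uu]; field_simp
  have e2 : ss α * yy β α = -(vv β α) := by
    rw [ss, yy, vv]; field_simp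
  rw [Rexp, smul_add, smul_smul, smul_smul, e1, e2, neg_smul, neg_smul, ← neg_add]

lemma legL_comb2 (s x y : KK) : legL (s • (x • 1 + y • J4))
    = s • (x • (1 : Matrix (Fin 2 × Fin 2 × Fin 2) (Fin 2 × Fin 2 × Fin 2) KK) + y • JL) := by
  ext p q
  simp only [legL, Matrix.of_apply, Matrix.add_apply, Matrix.smul_apply,
    Matrix.one_apply, J4, JL, smul_eq_mul, mul_one]
  by_cases h1 : p.1 = q.1 <;> by_cases h2 : p.2.1 = q.2.1 <;> by_cases h3 : p.2.2 = q.2.2 <;>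
    simp [Prod.ext_iff, h1, h2, h3] <;> ring

lemma legR_comb2 (s x y : KK) : legR (s • (x • 1 + y • J4))
    = s • (x • (1 : Matrix (Fin 2 × Fin 2 × Fin 2) (Fin 2 × Fin 2 × Fin 2) KK) + y • JR) := by
  ext p q
  simp only [legR, Matrix.of_apply, Matrix.add_apply, Matrix.smul_apply,
    Matrix.one_apply, J4, JR, smul_eq_mul, one_mul]
  by_cases h1 : p.1 = q.1 <;> by_cases h2 : p.2.1 = q.2.1 <;> by_cases h3 : p.2.2 = q.2.2 <;>
    simp [Prod.ext_iff, h1, h2, h3] <;> ring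

lemma key_poly : xx 2 0 * (xx 2 1 * yy 1 0 + xx 1 0 * yy 2 1 + 4*(yy 2 1 * yy 1 0))
    = xx 2 1 * (xx 1 0 * yy 2 0) := by
  simp only [xx, yy]; ring

/-- The Yang–Baxter equation for this interaction matrix:
`(R_{γβ} ⊗ I)(I ⊗ R_{γα})(R_{βα} ⊗ I) = (I ⊗ R_{βα})(R_{γα} ⊗ I)(I ⊗ R_{γβ})`
with `α = 0`, `β = 1`, `γ = 2`. -/
theorem yang_baxter_b28 :
    legL (R 2 1) * legR (R 2 0) * legL (R 1 0) =
      legR (R 1 0) * legL (R 2 0) * legR (R 2 1) := by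
  rw [Rexp2 2 1, Rexp2 2 0, Rexp2 1 0]
  simp only [legL_comb2, legR_comb2]
  simp only [Matrix.smul_mul, Matrix.mul_smul, smul_smul]
  rw [show ss 1 * (ss 0 * ss 0) = ss 0 * (ss 0 * ss 1) from by ring]
  congr 1
  exact yb_core JL JR E8 hLL hRR hLR hRL hEL hER _ _ _ _ _ _ key_poly

end
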